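/- Let G be a finite simple graph with n vertices and let v : V(G) → ℝⁿ be a faithful and linearly independent orthogonal co-representation of G. Let C be a maximal clique of G and for a subspace W of ℝⁿ let P_W denote the orthogonal projection onto W. Then for every vertex j of G, the projection onto (span{v_i : i ∈ C})^⊥ commutes with the projection onto span{v_j} if and only if j ∈ C. -/

import Mathlib

open RealInnerProductSpace

/-- A maximal clique of a simple graph, as a finite set of vertices. -/
def IsMaxClique {V : Type*} (G : SimpleGraph V) (C : Finset V) : Prop :=
  G.IsClique (C : Set V) ∧ ∀ D : Finset V, G.IsClique (D : Set V) → C ⊆ D → D = C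

/-- The orthogonal projection onto a subspace `K` of `ℝⁿ`, as an endomorphism of `ℝⁿ`. -/
noncomputable def projOnto {n : ℕ} (K : Submodule ℝ (EuclideanSpace ℝ (Fin n))) :
    EuclideanSpace ℝ (Fin n) →L[ℝ] EuclideanSpace ℝ (Fin n) :=
  K.subtypeL.comp (K.orthogonalProjection)

/-- Let `v` be a faithful and linearly independent orthogonal co-representation in `ℝⁿ`
of a finite simple graph `G` with `n` vertices, and let `C` be a maximal clique of `G`.
Then for every vertex `j`, the orthogonal projection onto `(span {v i : i ∈ C})ᗮ`
commutes with the orthogonal projection onto `span {v j}` if and only if `j ∈ C`. -/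
theorem projOnto_maxClique_commute_iff_mem
    {V : Type*} [Fintype V] {n : ℕ} (hn : Fintype.card V = n)
    (G : SimpleGraph V) (v : V → EuclideanSpace ℝ (Fin n))
    (hinj : Function.Injective v) (hunit : ∀ i, ‖v i‖ = 1)
    (hli : LinearIndependent ℝ v)
    (hfaith : ∀ i j : V, i ≠ j → (G.Adj i j ↔ ⟪v i, v j⟫ = 0))
    (C : Finset V) (hC : IsMaxClique G C) (j : V) :
    Commute (projOnto ((Submodule.span ℝ (v '' (C : Set V)))ᗮ))
        (projOnto (Submodule.span ℝ {v j})) ↔ j ∈ C := by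
  classical
  set K := Submodule.span ℝ (v '' (C : Set V)) with hKdef
  have hQ : ∀ y, projOnto (Submodule.span ℝ {v j}) y = ⟪v j, y⟫ • v j := fun y => by
    simpa [projOnto] using Submodule.starProjection_unit_singleton ℝ (hunit j) y
  have hPmem : ∀ x, projOnto Kᗮ x ∈ Kᗮ := fun x => (Kᗮ.orthogonalProjection x).2
  constructor
  · intro hcomm
    by_contra hj
    have h1 : projOnto Kᗮ (projOnto (Submodule.span ℝ {v j}) (v j))
        = projOnto (Submodule.span ℝ {v j}) (projOnto Kᗮ (v j)) := by
      have := hcomm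
      unfold Commute SemiconjBy at this
      calc projOnto Kᗮ (projOnto (Submodule.span ℝ {v j}) (v j))
          = (projOnto Kᗮ * projOnto (Submodule.span ℝ {v j})) (v j) := rfl
        _ = (projOnto (Submodule.span ℝ {v j}) * projOnto Kᗮ) (v j) := by rw [this]
        _ = _ := rfl
    have hQvj : projOnto (Submodule.span ℝ {v j}) (v j) = v j := by
      rw [hQ, real_inner_self_eq_norm_sq, hunit j]; simp
    rw [hQvj, hQ] at h1
    set c : ℝ := ⟪v j, projOnto Kᗮ (v j)⟫ with hc
    by_cases hc0 : c = 0
    · -- P vj = 0, so vj ∈ K, contradiction with linear independence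
      have hP0 : projOnto Kᗮ (v j) = 0 := by rw [h1, hc0, zero_smul]
      have hmem : v j ∈ K := by
        have hsub : v j - projOnto Kᗮ (v j) ∈ Kᗮᗮ :=
          Submodule.sub_starProjection_mem_orthogonal (K := Kᗮ) (v j)
      -- `projOnto Kᗮ (v j)` coincides with the coercion
        rw [hP0, sub_zero, Submodule.orthogonal_orthogonal] at hsub
        exact hsub
      exact hli.notMem_span_image hj hmem
    · -- vj ∈ Kᗮ, so j is orthogonal to everything in C, contradicting maximality
      have hvjmem : v j ∈ Kᗮ := by
        have : v j = c⁻¹ • projOnto Kᗮ (v j) := by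
          rw [h1]; rw [smul_smul, inv_mul_cancel₀ hc0, one_smul]
        rw [this]
        exact Kᗮ.smul_mem _ (hPmem (v j))
      have horth : ∀ i ∈ C, ⟪v i, v j⟫ = 0 := fun i hi =>
        hvjmem (v i) (Submodule.subset_span ⟨i, hi, rfl⟩)
      have hclique : G.IsClique ((insert j C : Finset V) : Set V) := by
        intro a ha b hb hab
        simp only [Finset.coe_insert, Set.mem_insert_iff, Finset.mem_coe] at ha hb
        rcases ha with rfl | ha
        · rcases hb with rfl | hb
          · exact absurd rfl hab
          · exact ((hfaith a b hab).mpr (by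
              rw [real_inner_comm]; exact horth b hb))
        · rcases hb with rfl | hb
          · exact (hfaith a b hab).mpr (horth a ha)
          · exact hC.1 ha hb hab
      have := hC.2 (insert j C) hclique (Finset.subset_insert j C)
      exact hj (this ▸ Finset.mem_insert_self j C)
  · intro hj
    have hvjK : v j ∈ K := Submodule.subset_span ⟨j, hj, rfl⟩
    have hPQ : projOnto Kᗮ * projOnto (Submodule.span ℝ {v j}) = 0 := by
      refine ContinuousLinearMap.ext fun x => ?_
      have hmemK : projOnto (Submodule.span ℝ {v j}) x ∈ K := by
        rw [hQ]
        exact K.smul_mem _ hvjK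
      show projOnto Kᗮ (projOnto (Submodule.span ℝ {v j}) x) = 0
      have h0 : Kᗮ.orthogonalProjection (projOnto (Submodule.span ℝ {v j}) x) = 0 :=
        Submodule.orthogonalProjectionOnto_apply_of_mem_orthogonal
          (K.le_orthogonal_orthogonal hmemK)
      show Kᗮ.subtypeL (Kᗮ.orthogonalProjection (projOnto (Submodule.span ℝ {v j}) x)) = 0
      rw [h0]
      rfl
    have hQP : projOnto (Submodule.span ℝ {v j}) * projOnto Kᗮ = 0 := by
      refine ContinuousLinearMap.ext fun x => ?_
      show projOnto (Submodule.span ℝ {v j}) (projOnto Kᗮ x) = 0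
      rw [hQ, (hPmem x) (v j) hvjK, zero_smul]
    unfold Commute SemiconjBy
    rw [hPQ, hQP]
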